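/- The subspace A^G·f := {D f : D ∈ A^G} of L is an irreducible A^G-module: it is nonzero and has no A^G-invariant subspace other than 0 and itself. (Intermediate claim in the proof of Theorem 2.2, part 1.) -/

import Mathlib

/-- Conjugation action of a group element on endomorphisms of `L`:
`g · T := ρ(g) ∘ T ∘ ρ(g)⁻¹`. -/
def conjEnd {G L : Type*} [Group G] [AddCommGroup L] [Module ℂ L]
    (ρ : Representation ℂ G L) (g : G) :
    Module.End ℂ L →ₗ[ℂ] Module.End ℂ L where
  toFun T := ρ g ∘ₗ T ∘ₗ ρ g⁻¹
  map_add' T S := by ext v; simp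
  map_smul' c T := by ext v; simp


section Aux
open Polynomial

variable {L : Type*} [AddCommGroup L] [Module ℂ L]

/-- Evaluation of endomorphisms at a vector, as a linear map. -/
def applyEnd (v : L) : Module.End ℂ L →ₗ[ℂ] L where
  toFun T := T v
  map_add' := fun _ _ => rfl
  map_smul' := fun _ _ => rfl

@[simp] lemma applyEnd_apply (v : L) (T : Module.End ℂ L) : applyEnd v T = T v := rfl

lemma aux_orbit (A : Subalgebra ℂ (Module.End ℂ L))
    (hAirr : ∀ p : Submodule ℂ L, (∀ T ∈ A, ∀ x ∈ p, T x ∈ p) → p = ⊥ ∨ p = ⊤)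
    {v : L} (hv : v ≠ 0) (u : L) : ∃ T ∈ A, T v = u := by
  set p : Submodule ℂ L := (Subalgebra.toSubmodule A).map (applyEnd v) with hp
  have hstab : ∀ T ∈ A, ∀ x ∈ p, T x ∈ p := by
    rintro T hT x ⟨S, hS, rfl⟩
    exact ⟨T * S, A.mul_mem hT hS, rfl⟩
  have hvp : v ∈ p := ⟨1, A.one_mem, rfl⟩
  rcases hAirr p hstab with h | h
  · rw [h] at hvp; exact absurd hvp (by simpa using hv)
  · have : u ∈ p := by rw [h]; trivial
    obtain ⟨T, hT, hTu⟩ := this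
    exact ⟨T, hT, hTu⟩

lemma aux_bij (A : Subalgebra ℂ (Module.End ℂ L))
    (hAirr : ∀ p : Submodule ℂ L, (∀ T ∈ A, ∀ x ∈ p, T x ∈ p) → p = ⊥ ∨ p = ⊤)
    (d : Module.End ℂ L) (hd : ∀ T ∈ A, d * T = T * d) (hd0 : d ≠ 0) :
    Function.Bijective d := by
  constructor
  · rw [← LinearMap.ker_eq_bot]
    rcases hAirr (LinearMap.ker d) (fun T hT x hx => by
      have : d (T x) = T (d x) := by
        have := congrArg (fun S => S x) (hd T hT); simpa using this
      simp only [LinearMap.mem_ker] at hx ⊢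
      rw [this, hx, map_zero]) with h | h
    · exact h
    · exact absurd (LinearMap.ker_eq_top.mp h) hd0
  · rw [← LinearMap.range_eq_top]
    rcases hAirr (LinearMap.range d) (fun T hT x hx => by
      obtain ⟨y, rfl⟩ := hx
      have h2 : d (T y) = T (d y) := by
        have := congrArg (fun S => S y) (hd T hT); simpa using this
      exact ⟨T y, h2⟩) with h | h
    · exact absurd (LinearMap.range_eq_bot.mp h) hd0
    · exact h

lemma aux_inj_aeval (e : Module.End ℂ L)
    (hbij : ∀ c : ℂ, Function.Bijective (e - c • (1 : Module.End ℂ L))) :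
    ∀ (q : ℂ[X]), q ≠ 0 → Function.Injective (aeval e q) := by
  suffices h : ∀ (n : ℕ) (q : ℂ[X]), q.natDegree = n → q ≠ 0 → Function.Injective (aeval e q) by
    exact fun q => h q.natDegree q rfl
  intro n
  induction n using Nat.strong_induction_on with
  | _ n IH =>
    intro q hdeg hq0
    rcases Nat.eq_zero_or_pos n with hn | hn
    · obtain ⟨a, rfl⟩ := Polynomial.natDegree_eq_zero.mp (hdeg.trans hn)
      have ha : a ≠ 0 := fun h => hq0 (by rw [h, map_zero])
      intro x y hxy
      simp only [aeval_C, Algebra.algebraMap_eq_smul_one, LinearMap.smul_apply,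
        Module.End.one_apply] at hxy
      exact smul_right_injective L ha hxy
    · have hdq : q.degree ≠ 0 := by
        rw [Polynomial.degree_eq_natDegree hq0, hdeg]
        exact_mod_cast Nat.pos_iff_ne_zero.mp hn
      obtain ⟨μ, hμ⟩ := IsAlgClosed.exists_root q hdq
      obtain ⟨q₂, hq₂⟩ := Polynomial.dvd_iff_isRoot.mpr hμ
      have hq₂0 : q₂ ≠ 0 := fun h => hq0 (by rw [hq₂, h, mul_zero])
      have hXC : (X - C μ : ℂ[X]) ≠ 0 := Polynomial.X_sub_C_ne_zero μ
      have hdeg2 : q₂.natDegree < n := by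
        have := Polynomial.natDegree_mul hXC hq₂0
        rw [← hq₂, hdeg, Polynomial.natDegree_X_sub_C] at this
        omega
      have h2 := IH q₂.natDegree hdeg2 q₂ rfl hq₂0
      rw [hq₂, map_mul]
      have h1 : Function.Injective (aeval e (X - C μ)) := by
        have : aeval e (X - C μ) = e - μ • 1 := by
          rw [map_sub, aeval_X, aeval_C, Algebra.algebraMap_eq_smul_one]
        rw [this]; exact (hbij μ).injective
      intro x y hxy
      exact h2 (h1 hxy)

lemma aux_commutant
    (hcount : ∃ s : Set L, s.Countable ∧ Submodule.span ℂ s = ⊤)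
    (A : Subalgebra ℂ (Module.End ℂ L))
    (hAirr : ∀ p : Submodule ℂ L, (∀ T ∈ A, ∀ x ∈ p, T x ∈ p) → p = ⊥ ∨ p = ⊤)
    (e : Module.End ℂ L) (he : ∀ T ∈ A, e * T = T * e) :
    ∃ c : ℂ, e = c • (1 : Module.End ℂ L) := by
  by_contra hc
  push_neg at hc
  rcases subsingleton_or_nontrivial L with hL | hL
  · exact hc 0 (by ext x; exact Subsingleton.elim _ _)
  obtain ⟨v, hv⟩ := exists_ne (0 : L)
  set d : ℂ → Module.End ℂ L := fun c => e - c • 1 with hd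
  have hdcomm : ∀ c : ℂ, ∀ T ∈ A, d c * T = T * d c := by
    intro c T hT
    simp only [hd, sub_mul, mul_sub, he T hT, smul_mul_assoc, mul_smul_comm, one_mul, mul_one]
  have hdne : ∀ c, d c ≠ 0 := fun c h => hc c (by rwa [hd, sub_eq_zero] at h)
  have hbij : ∀ c : ℂ, Function.Bijective (e - c • (1 : Module.End ℂ L)) :=
    fun c => aux_bij A hAirr (d c) (hdcomm c) (hdne c)
  set r : ℂ → Module.End ℂ L := fun c =>
    ((LinearEquiv.ofBijective (d c) (hbij c)).symm : L →ₗ[ℂ] L) with hr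
  have hdr : ∀ c, d c * r c = 1 := by
    intro c; ext x
    exact (LinearEquiv.ofBijective (d c) (hbij c)).apply_symm_apply x
  -- linear independence of the resolvent family
  have key : LinearIndependent ℂ (fun c : ℂ => r c v) := by
    rw [linearIndependent_iff]
    intro l hl
    by_contra hl0
    obtain ⟨k, hk⟩ : ∃ k, l k ≠ 0 := by
      by_contra h; push_neg at h; exact hl0 (Finsupp.ext h)
    set s := l.support with hs
    have hks : k ∈ s := Finsupp.mem_support_iff.mpr hk
    set q : ℂ[X] := ∑ c ∈ s, C (l c) * ∏ j ∈ s.erase c, (X - C j) with hq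
    have hsum : ∑ c ∈ s, l c • r c v = 0 := by
      rw [Finsupp.linearCombination_apply, Finsupp.sum] at hl
      exact hl
    set Q : Module.End ℂ L := aeval e (∏ j ∈ s, (X - C j)) with hQ
    have hQr : ∀ c ∈ s, Q * r c = aeval e (∏ j ∈ s.erase c, (X - C j)) := by
      intro c hc'
      have : (∏ j ∈ s, (X - C j : ℂ[X])) = (∏ j ∈ s.erase c, (X - C j)) * (X - C c) :=
        (Finset.prod_erase_mul s _ hc').symm
      rw [hQ, this, map_mul, mul_assoc]
      have : aeval e (X - C c) = d c := by
        rw [map_sub, aeval_X, aeval_C, Algebra.algebraMap_eq_smul_one, hd]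
      rw [this, hdr, mul_one]
    have hqv : (aeval e q) v = 0 := by
      have h1 : aeval e q = ∑ c ∈ s, l c • aeval e (∏ j ∈ s.erase c, (X - C j)) := by
        rw [hq, map_sum]
        refine Finset.sum_congr rfl fun c _ => ?_
        rw [map_mul, aeval_C, Algebra.algebraMap_eq_smul_one, smul_mul_assoc, one_mul]
      calc (aeval e q) v = ∑ c ∈ s, l c • (aeval e (∏ j ∈ s.erase c, (X - C j))) v := by
            rw [h1]; simp [LinearMap.sum_apply]
        _ = ∑ c ∈ s, l c • Q (r c v) := by
            refine Finset.sum_congr rfl fun c hc' => ?_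
            rw [← hQr c hc']; rfl
        _ = Q (∑ c ∈ s, l c • r c v) := by rw [map_sum]; simp
        _ = 0 := by rw [hsum, map_zero]
    have hq0 : q ≠ 0 := by
      intro h
      have heval : q.eval k = l k * ∏ j ∈ s.erase k, (k - j) := by
        rw [hq, Polynomial.eval_finset_sum]
        rw [Finset.sum_eq_single k]
        · simp [Polynomial.eval_prod]
        · intro c hc' hck
          have hkc : k ∈ s.erase c := Finset.mem_erase.mpr ⟨fun h' => hck h'.symm, hks⟩
          simp only [Polynomial.eval_mul, Polynomial.eval_C, Polynomial.eval_prod,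
            Polynomial.eval_sub, Polynomial.eval_X]
          rw [Finset.prod_eq_zero hkc (by ring), mul_zero]
        · intro h'; exact absurd hks h'
      have hne : q.eval k ≠ 0 := by
        rw [heval]
        refine mul_ne_zero hk (Finset.prod_ne_zero_iff.mpr fun j hj => ?_)
        have : j ≠ k := (Finset.mem_erase.mp hj).1
        exact sub_ne_zero.mpr (fun h' => this h'.symm)
      rw [h] at hne; simp at hne
    exact hv ((aux_inj_aeval e hbij q hq0) (by rw [hqv, map_zero]))
  -- cardinality contradiction
  have h1 := key.cardinal_lift_le_rank
  obtain ⟨s, hsc, hss⟩ := hcount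
  have h2 : Module.rank ℂ L ≤ Cardinal.aleph0 := by
    have := rank_span_le (R := ℂ) s
    rw [hss] at this
    have h3 : Module.rank ℂ L = Module.rank ℂ (⊤ : Submodule ℂ L) := (rank_top ℂ L).symm
    rw [h3]
    exact le_trans this ((Cardinal.mk_le_aleph0_iff).mpr hsc)
  have h4 : (Cardinal.mk ℂ) ≤ Cardinal.aleph0 := by
    have h5 := h1.trans (Cardinal.lift_le.mpr h2)
    rw [Cardinal.lift_aleph0] at h5
    exact Cardinal.lift_le_aleph0.mp h5

  rw [Cardinal.mk_complex] at h4
  exact absurd h4 (not_le.mpr Cardinal.aleph0_lt_continuum)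

lemma aux_density
    (hcount : ∃ s : Set L, s.Countable ∧ Submodule.span ℂ s = ⊤)
    (A : Subalgebra ℂ (Module.End ℂ L))
    (hAirr : ∀ p : Submodule ℂ L, (∀ T ∈ A, ∀ x ∈ p, T x ∈ p) → p = ⊥ ∨ p = ⊤) :
    ∀ (n : ℕ) (w u : Fin n → L), LinearIndependent ℂ w → ∃ T ∈ A, ∀ i, T (w i) = u i := by
  intro n
  induction n with
  | zero => exact fun w u _ => ⟨1, A.one_mem, fun i => i.elim0⟩
  | succ n IH =>
    intro w u hw
    set w' : Fin n → L := fun i => w i.castSucc with hw'def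
    have hw' : LinearIndependent ℂ w' := hw.comp Fin.castSucc (Fin.castSucc_injective n)
    set wl := w (Fin.last n) with hwl
    set I : Submodule ℂ (Module.End ℂ L) :=
      (Subalgebra.toSubmodule A) ⊓ ⨅ i : Fin n, LinearMap.ker (applyEnd (w' i)) with hI
    have hmemI : ∀ S : Module.End ℂ L, S ∈ I ↔ S ∈ A ∧ ∀ i, S (w' i) = 0 := by
      intro S
      simp [hI, Submodule.mem_iInf, LinearMap.mem_ker, Subalgebra.mem_toSubmodule]
    set J : Submodule ℂ L := I.map (applyEnd wl) with hJ
    have hJstab : ∀ T ∈ A, ∀ x ∈ J, T x ∈ J := by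
      rintro T hT x ⟨S, hS, rfl⟩
      replace hS : S ∈ A ∧ ∀ i, S (w' i) = 0 := (hmemI S).mp hS
      refine ⟨T * S, (hmemI _).mpr ⟨A.mul_mem hT hS.1, fun i => ?_⟩, rfl⟩
      simp [Module.End.mul_apply, hS.2 i]
    rcases hAirr J hJstab with hbot | htop
    · -- contradiction case
      exfalso
      have hcong : ∀ T S : Module.End ℂ L, T ∈ A → S ∈ A →
          (∀ i, T (w' i) = S (w' i)) → T wl = S wl := by
        intro T S hT hS h
        have hTS : T - S ∈ I := (hmemI _).mpr
          ⟨A.sub_mem hT hS, fun i => by simp [LinearMap.sub_apply, h i]⟩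
        have : applyEnd wl (T - S) ∈ J := ⟨T - S, hTS, rfl⟩
        rw [hbot] at this
        have h0 : (T - S) wl = 0 := by simpa using this
        rw [LinearMap.sub_apply] at h0
        exact sub_eq_zero.mp h0
      set tgt : Fin n → L → Fin n → L := fun j u' i => if i = j then u' else 0 with htgt
      have hex : ∀ (j : Fin n) (u' : L), ∃ T ∈ A, ∀ i, T (w' i) = tgt j u' i :=
        fun j u' => IH w' (tgt j u') hw'
      choose Tc hTcA hTc using hex
      set ej : Fin n → L → L := fun j u' => (Tc j u') wl with hej
      have hcong' : ∀ (j : Fin n) (T : Module.End ℂ L) (u' : L), T ∈ A →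
          (∀ i, T (w' i) = tgt j u' i) → ej j u' = T wl := by
        intro j T u' hT h
        exact hcong _ T (hTcA j u') hT (fun i => (hTc j u' i).trans (h i).symm)
      have e_add : ∀ j u₁ u₂, ej j (u₁ + u₂) = ej j u₁ + ej j u₂ := by
        intro j u₁ u₂
        have := hcong' j (Tc j u₁ + Tc j u₂) (u₁ + u₂)
          (A.add_mem (hTcA j u₁) (hTcA j u₂))
          (fun i => by
            simp only [LinearMap.add_apply, hTc j u₁ i, hTc j u₂ i, htgt]
            by_cases h : i = j <;> simp [h])
        rw [this, LinearMap.add_apply]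
      have e_smul : ∀ j (c : ℂ) u', ej j (c • u') = c • ej j u' := by
        intro j c u'
        have := hcong' j (c • Tc j u') (c • u') (A.smul_mem (hTcA j u') c)
          (fun i => by
            simp only [LinearMap.smul_apply, hTc j u' i, htgt]
            by_cases h : i = j <;> simp [h])
        rw [this, LinearMap.smul_apply]
      set E : Fin n → Module.End ℂ L := fun j =>
        { toFun := ej j
          map_add' := e_add j
          map_smul' := e_smul j } with hE
      have hEcomm : ∀ j, ∀ S ∈ A, (E j) * S = S * (E j) := by
        intro j S hS
        ext u'
        have : ej j (S u') = S (ej j u') := by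
          have := hcong' j (S * Tc j u') (S u') (A.mul_mem hS (hTcA j u'))
            (fun i => by
              simp only [Module.End.mul_apply, hTc j u' i, htgt]
              by_cases h : i = j <;> simp [h])
          rw [this, Module.End.mul_apply]
        simpa [hE, Module.End.mul_apply] using this
      have hscal : ∀ j, ∃ c : ℂ, E j = c • (1 : Module.End ℂ L) :=
        fun j => aux_commutant hcount A hAirr (E j) (hEcomm j)
      choose cs hcs using hscal
      -- wl = ∑ j, cs j • w' j
      have hTstar : ∀ i, (∑ j, Tc j (w' j)) (w' i) = (1 : Module.End ℂ L) (w' i) := by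
        intro i
        rw [LinearMap.sum_apply, Module.End.one_apply]
        calc ∑ j, (Tc j (w' j)) (w' i) = ∑ j, if i = j then w' j else 0 := by
              refine Finset.sum_congr rfl fun j _ => ?_
              rw [hTc j (w' j) i]
          _ = w' i := by
              rw [Finset.sum_ite_eq]
              simp
      have hwlspan : wl = ∑ j, cs j • w' j := by
        have h1 := hcong _ (∑ j, Tc j (w' j)) A.one_mem
          (sum_mem (fun j _ => hTcA j (w' j))) (fun i => (hTstar i).symm)
        rw [Module.End.one_apply] at h1
        rw [h1, LinearMap.sum_apply]
        refine Finset.sum_congr rfl fun j _ => ?_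
        have : (Tc j (w' j)) wl = E j (w' j) := rfl
        rw [this, hcs j]
        simp
      -- contradiction with linear independence
      have hsnoc : w = Fin.snoc w' wl := by
        funext i
        induction i using Fin.lastCases with
        | last => simp [hwl]
        | cast i => simp [hw'def]
      rw [hsnoc] at hw
      have := (linearIndependent_fin_snoc.mp hw).2
      apply this
      rw [hwlspan]
      exact Submodule.sum_mem _ (fun j _ =>
        Submodule.smul_mem _ _ (Submodule.subset_span ⟨j, rfl⟩))
    · -- J = ⊤ : solve
      obtain ⟨T₀, hT₀A, hT₀⟩ := IH w' (fun i => u i.castSucc) hw'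
      have : u (Fin.last n) - T₀ wl ∈ J := by rw [htop]; trivial
      obtain ⟨T₁, hT₁I, hT₁⟩ := this
      replace hT₁I : T₁ ∈ A ∧ ∀ i, T₁ (w' i) = 0 := (hmemI T₁).mp hT₁I
      refine ⟨T₀ + T₁, A.add_mem hT₀A hT₁I.1, fun i => ?_⟩
      induction i using Fin.lastCases with
      | last =>
        have hT₁' : T₁ wl = u (Fin.last n) - T₀ wl := hT₁
        rw [LinearMap.add_apply, ← hwl, hT₁']
        abel
      | cast i =>
        rw [LinearMap.add_apply]
        have h1 : T₀ (w i.castSucc) = u i.castSucc := hT₀ i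
        have h2 : T₁ (w i.castSucc) = 0 := hT₁I.2 i
        rw [h1, h2, add_zero]

end Aux

section Aux2

variable {L : Type*} [AddCommGroup L] [Module ℂ L]

lemma conjEnd_apply' {G L : Type*} [Group G] [AddCommGroup L] [Module ℂ L]
    (ρ : Representation ℂ G L) (g : G) (T : Module.End ℂ L) (x : L) :
    conjEnd ρ g T x = ρ g (T (ρ g⁻¹ x)) := rfl

lemma rho_inv_rho {G L : Type*} [Group G] [AddCommGroup L] [Module ℂ L]
    (ρ : Representation ℂ G L) (g : G) (x : L) : ρ g⁻¹ (ρ g x) = x := by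
  have : (ρ g⁻¹ * ρ g) x = ρ (g⁻¹ * g) x := by rw [map_mul]
  simpa [Module.End.mul_apply] using this

lemma invariant_comm {G L : Type*} [Group G] [AddCommGroup L] [Module ℂ L]
    {ρ : Representation ℂ G L} {D : Module.End ℂ L}
    (hD : ∀ g, conjEnd ρ g D = D) (g : G) (x : L) : D (ρ g x) = ρ g (D x) := by
  conv_lhs => rw [← hD g]
  rw [conjEnd_apply', rho_inv_rho]

def killer (D₀ : Module.End ℂ L) (X : Submodule ℂ L) : Submodule ℂ (Module.End ℂ L) where
  carrier := {S | ∀ z ∈ X, S (D₀ z) = 0}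
  add_mem' := fun {a b} ha hb z hz => by
    simp only [LinearMap.add_apply, ha z hz, hb z hz, add_zero]
  zero_mem' := fun z hz => rfl
  smul_mem' := fun c S hS z hz => by
    simp only [LinearMap.smul_apply, hS z hz, smul_zero]

lemma mem_killer {D₀ : Module.End ℂ L} {X : Submodule ℂ L} {S : Module.End ℂ L} :
    S ∈ killer D₀ X ↔ ∀ z ∈ X, S (D₀ z) = 0 := Iff.rfl

end Aux2

/-- **Intermediate claim in the proof of Theorem 2.2, part 1.**
If `X` is an irreducible `G`-invariant subspace of `L` and `f ∈ X` is nonzero,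
then `A^G·f := {D f : D ∈ A^G}` is an irreducible `A^G`-module: it is nonzero,
and every `A^G`-invariant subspace of it is either `0` or all of `A^G·f`. -/
theorem orbit_is_irreducible_module
    {G L : Type*} [Group G] [AddCommGroup L] [Module ℂ L]
    (ρ : Representation ℂ G L)
    -- `L` has countable dimension
    (hcount : ∃ s : Set L, s.Countable ∧ Submodule.span ℂ s = ⊤)
    -- the `G`-action on `L` is locally finite
    (hlocfin : ∀ v : L, ∃ Y : Submodule ℂ L,
      (∀ g : G, ∀ y ∈ Y, ρ g y ∈ Y) ∧ FiniteDimensional ℂ Y ∧ v ∈ Y)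
    -- the `G`-action on `L` is completely reducible
    (hcompred : ∀ p : Submodule ℂ L, (∀ g : G, ∀ y ∈ p, ρ g y ∈ p) →
      ∃ q : Submodule ℂ L, (∀ g : G, ∀ y ∈ q, ρ g y ∈ q) ∧ IsCompl p q)
    (A : Subalgebra ℂ (Module.End ℂ L))
    -- `A` acts irreducibly on `L`
    (hAirr : ∀ p : Submodule ℂ L, (∀ T ∈ A, ∀ x ∈ p, T x ∈ p) → p = ⊥ ∨ p = ⊤)
    -- `A` is invariant under the conjugation `G`-action
    (hAG : ∀ g : G, ∀ T ∈ A, conjEnd ρ g T ∈ A)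
    -- the `G`-action on `A` is locally finite
    (hAlocfin : ∀ T ∈ A, ∃ E : Submodule ℂ (Module.End ℂ L),
      E ≤ Subalgebra.toSubmodule A ∧ (∀ g : G, ∀ S ∈ E, conjEnd ρ g S ∈ E) ∧
      FiniteDimensional ℂ E ∧ T ∈ E)
    -- the `G`-action on `A` is completely reducible
    (hAcompred : ∀ p : Submodule ℂ (Module.End ℂ L),
      p ≤ Subalgebra.toSubmodule A → (∀ g : G, ∀ S ∈ p, conjEnd ρ g S ∈ p) →
      ∃ q : Submodule ℂ (Module.End ℂ L), q ≤ Subalgebra.toSubmodule A ∧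
        (∀ g : G, ∀ S ∈ q, conjEnd ρ g S ∈ q) ∧
        p ⊓ q = ⊥ ∧ p ⊔ q = Subalgebra.toSubmodule A)
    -- `X` is a nonzero `G`-invariant subspace of `L`, irreducible as a `G`-module
    (X : Submodule ℂ L) (hXne : X ≠ ⊥)
    (hXinv : ∀ g : G, ∀ x ∈ X, ρ g x ∈ X)
    (hXirr : ∀ p : Submodule ℂ L, p ≤ X → (∀ g : G, ∀ x ∈ p, ρ g x ∈ p) →
      p = ⊥ ∨ p = X)
    -- `f` is a nonzero element of `X`
    (f : L) (hf : f ∈ X) (hf0 : f ≠ 0) :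
    -- `A^G·f` is nonzero, and the only `A^G`-invariant subspaces of `A^G·f`
    -- are `0` and `A^G·f` itself
    (∃ y ∈ {y : L | ∃ D ∈ A, (∀ g : G, conjEnd ρ g D = D) ∧ D f = y}, y ≠ 0) ∧
    (∀ p : Submodule ℂ L,
      (p : Set L) ⊆ {y : L | ∃ D ∈ A, (∀ g : G, conjEnd ρ g D = D) ∧ D f = y} →
      (∀ D ∈ A, (∀ g : G, conjEnd ρ g D = D) → ∀ x ∈ p, D x ∈ p) →
      p = ⊥ ∨
        (p : Set L) = {y : L | ∃ D ∈ A, (∀ g : G, conjEnd ρ g D = D) ∧ D f = y}) := by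
  constructor
  · refine ⟨f, ⟨1, A.one_mem, fun g => ?_, rfl⟩, hf0⟩
    ext z
    rw [conjEnd_apply', Module.End.one_apply, Module.End.one_apply]
    have := rho_inv_rho ρ g⁻¹ z
    rwa [inv_inv] at this
  · intro p hsub hinv
    by_cases hp : p = ⊥
    · exact Or.inl hp
    right
    obtain ⟨v, hvp, hv0⟩ := Submodule.exists_mem_ne_zero_of_ne_bot hp
    obtain ⟨D₀, hD₀A, hD₀inv, hD₀f⟩ := hsub hvp
    -- `X` is finite dimensional
    obtain ⟨Y, hYinv, hYfd, hfY⟩ := hlocfin f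
    have hXY : X ≤ Y := by
      rcases hXirr (X ⊓ Y) inf_le_left
          (fun g z hz => ⟨hXinv g z hz.1, hYinv g z hz.2⟩) with h | h
      · exfalso
        have hmem : f ∈ X ⊓ Y := ⟨hf, hfY⟩
        rw [h] at hmem
        exact hf0 hmem
      · intro z hz
        have hmem : z ∈ X ⊓ Y := by rw [h]; exact hz
        exact hmem.2
    haveI : FiniteDimensional ℂ X :=
      FiniteDimensional.of_injective (Submodule.inclusion hXY)
        (Submodule.inclusion_injective hXY)
    set b := Module.finBasis ℂ X with hb
    set n := Module.finrank ℂ X with hn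
    set x : Fin n → L := fun i => (b i : L) with hx
    have hxX : ∀ i, x i ∈ X := fun i => (b i).2
    have hxind : LinearIndependent ℂ x :=
      b.linearIndependent.map' X.subtype (Submodule.ker_subtype X)
    have hxspan : Submodule.span ℂ (Set.range x) = X := by
      have h1 : Set.range x = X.subtype '' Set.range b := by
        rw [← Set.range_comp]; rfl
      rw [h1, Submodule.span_image, b.span_eq, Submodule.map_top, Submodule.range_subtype]
    -- `D₀` is injective on `X`
    have hker : X ⊓ LinearMap.ker D₀ = ⊥ := by
      rcases hXirr (X ⊓ LinearMap.ker D₀) inf_le_left (fun g z hz => by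
          have hz1 : z ∈ X := hz.1
          have hz2 : D₀ z = 0 := hz.2
          have h2 : D₀ (ρ g z) = ρ g (D₀ z) := invariant_comm hD₀inv g z
          exact Submodule.mem_inf.mpr ⟨hXinv g z hz1,
            LinearMap.mem_ker.mpr (by rw [h2, hz2, map_zero])⟩) with h | h
      · exact h
      · exfalso
        have hXle : X ≤ LinearMap.ker D₀ := by rw [← h]; exact le_refl _ |>.trans inf_le_right
        have : D₀ f = 0 := hXle hf
        rw [hD₀f] at this
        exact hv0 this
    set w : Fin n → L := fun i => D₀ (x i) with hw
    have hwind : LinearIndependent ℂ w := by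
      have := hxind.map (f := D₀) (by rw [hxspan]; exact disjoint_iff.mpr hker)
      exact this
    obtain ⟨S', hS'A, hS'⟩ := aux_density hcount A hAirr n w x hwind
    have hS'X : ∀ z ∈ X, S' (D₀ z) = z := by
      have heq : (S' ∘ₗ D₀) ∘ₗ X.subtype = X.subtype := b.ext (fun i => by
        simp only [LinearMap.comp_apply, Submodule.subtype_apply]
        exact hS' i)
      intro z hz
      have := congrArg (fun φ => φ ⟨z, hz⟩) heq
      simpa using this
    -- invariantization
    set K : Submodule ℂ (Module.End ℂ L) :=
      (Subalgebra.toSubmodule A) ⊓ killer D₀ X with hK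
    have hKle : K ≤ Subalgebra.toSubmodule A := inf_le_left
    have hKG : ∀ g : G, ∀ S ∈ K, conjEnd ρ g S ∈ K := by
      intro g S hS
      refine ⟨(Subalgebra.mem_toSubmodule A).mpr (hAG g S ((Subalgebra.mem_toSubmodule A).mp hS.1)),
        fun z hz => ?_⟩
      rw [conjEnd_apply']
      have h1 : ρ g⁻¹ (D₀ z) = D₀ (ρ g⁻¹ z) := (invariant_comm hD₀inv g⁻¹ z).symm
      rw [h1, hS.2 _ (hXinv g⁻¹ z hz), map_zero]
    obtain ⟨Q, hQle, hQG, hKQbot, hKQtop⟩ := hAcompred K hKle hKG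
    have hS'mem : S' ∈ K ⊔ Q := by
      rw [hKQtop]; exact (Subalgebra.mem_toSubmodule A).mpr hS'A
    obtain ⟨k, hk, S'', hS''Q, hkS⟩ := Submodule.mem_sup.mp hS'mem
    have hS''A : S'' ∈ A := (Subalgebra.mem_toSubmodule A).mp (hQle hS''Q)
    have hS''X : ∀ z ∈ X, S'' (D₀ z) = z := by
      intro z hz
      have h1 := congrArg (fun T : Module.End ℂ L => T (D₀ z)) hkS
      simp only [LinearMap.add_apply] at h1
      rw [hk.2 z hz, zero_add] at h1
      rw [h1, hS'X z hz]
    have hS''inv : ∀ g, conjEnd ρ g S'' = S'' := by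
      intro g
      have hdiff : conjEnd ρ g S'' - S'' ∈ K ⊓ Q := by
        constructor
        · constructor
          · exact (Subalgebra.mem_toSubmodule A).mpr
              (A.sub_mem (hAG g S'' hS''A) hS''A)
          · intro z hz
            rw [LinearMap.sub_apply, conjEnd_apply']
            have h1 : ρ g⁻¹ (D₀ z) = D₀ (ρ g⁻¹ z) := (invariant_comm hD₀inv g⁻¹ z).symm
            rw [h1, hS''X _ (hXinv g⁻¹ z hz), hS''X z hz]
            have := rho_inv_rho ρ g⁻¹ z
            rw [inv_inv] at this
            rw [this, sub_self]
        · exact Submodule.sub_mem Q (hQG g S'' hS''Q) hS''Q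
      rw [hKQbot] at hdiff
      have := (Submodule.mem_bot ℂ).mp hdiff
      exact sub_eq_zero.mp this
    have hfv : S'' v = f := by rw [← hD₀f]; exact hS''X f hf
    have hfp : f ∈ p := by rw [← hfv]; exact hinv S'' hS''A hS''inv v hvp
    apply Set.Subset.antisymm hsub
    rintro y ⟨D, hDA, hDinv, rfl⟩
    exact hinv D hDA hDinv f hfp
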